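/- Uniqueness of self-dual elements: if A, B ∈ H both satisfy d(A)=A, d(B)=B, both are supported on {y ≤ x} with coefficient 1 at T̃_x, and all coefficients h_{y}(v) at T̃_y for y < x lie in vℤ[v], then A = B. Equivalently: a self-dual element supported on {y < x} with all coefficients in vℤ[v] is zero. -/

import Mathlib

open LaurentPolynomial

/-- The Bruhat order on a Coxeter group: `y ≤ x` iff `x` can be obtained from `y` by
successively multiplying by reflections, increasing the length at each step. -/
def bruhatLE {B W : Type} [Group W] {M : CoxeterMatrix B} (cs : CoxeterSystem M W)
    (y x : W) : Prop :=
  Relation.ReflTransGen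
    (fun a c => cs.length a < cs.length c ∧ ∃ t : W, cs.IsReflection t ∧ c = t * a) y x

/-- The submodule `vℤ[v] ⊆ ℤ[v,v⁻¹]` of polynomials in `v` with zero constant term:
the `ℤ`-span of `v, v², v³, …`. -/
noncomputable def vZv : Submodule ℤ (LaurentPolynomial ℤ) :=
  Submodule.span ℤ {q : LaurentPolynomial ℤ | ∃ n : ℕ, q = T ((n : ℤ) + 1)}

/-- **uniqueness of self-dual elements.** Let `H` be the Hecke algebra of a
Coxeter system over `ℤ[v,v⁻¹]` (basis `{T_w = b w}`, `T_e = 1`, standard relations) with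
Kazhdan–Lusztig involution `d`.  If `A, B ∈ H` are both self-dual (`d A = A`, `d B = B`),
both supported on `{y : y ≤ x}` with coefficient `1` at `T̃_x = v^{l(x)} T_x` (i.e. the
coefficient of `T_x` is `v^{l(x)}`), and for `y < x` all coefficients
`h_y = v^{-l(y)}·(repr · ) y` at `T̃_y` lie in `vℤ[v]`, then `A = B`. -/
theorem stmt10 {B W : Type} [Group W] (M : CoxeterMatrix B) (cs : CoxeterSystem M W)
    {H : Type} [Ring H] [Algebra (LaurentPolynomial ℤ) H]
    (b : Module.Basis W (LaurentPolynomial ℤ) H)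
    (hone : b 1 = 1)
    (hmul : ∀ x y : W, cs.length (x * y) = cs.length x + cs.length y →
      b x * b y = b (x * y))
    (hquad : ∀ i : B, b (cs.simple i) * b (cs.simple i) =
      (T (-2) : LaurentPolynomial ℤ) • (1 : H) +
        ((T (-2) - 1 : LaurentPolynomial ℤ)) • b (cs.simple i))
    (d : H →+* H)
    (hd_smul : ∀ (r : LaurentPolynomial ℤ) (x : H),
      d (r • x) = (invert r : LaurentPolynomial ℤ) • d x)
    (hd_basis : ∀ w : W, d (b w) * b w⁻¹ = 1 ∧ b w⁻¹ * d (b w) = 1)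
    (hd_invol : ∀ x : H, d (d x) = x)
    (x : W) (A A' : H)
    (hA : d A = A) (hA' : d A' = A')
    (hsuppA : ∀ y : W, ¬ bruhatLE cs y x → b.repr A y = 0)
    (hsuppA' : ∀ y : W, ¬ bruhatLE cs y x → b.repr A' y = 0)
    (htopA : b.repr A x = T (cs.length x : ℤ))
    (htopA' : b.repr A' x = T (cs.length x : ℤ))
    (hlowA : ∀ y : W, bruhatLE cs y x → y ≠ x →
      T (-(cs.length y : ℤ)) * b.repr A y ∈ vZv)
    (hlowA' : ∀ y : W, bruhatLE cs y x → y ≠ x →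
      T (-(cs.length y : ℤ)) * b.repr A' y ∈ vZv) :
    A = A' := by
  classical
  set R := LaurentPolynomial ℤ
  -- the span of basis elements of length < m
  set S : ℕ → Submodule R H :=
    fun m => Submodule.span R {h : H | ∃ u : W, cs.length u < m ∧ h = b u} with hS
  have Smono : ∀ {m m' : ℕ}, m ≤ m' → S m ≤ S m' := by
    intro m m' hmm
    apply Submodule.span_mono
    rintro h ⟨u, hu, rfl⟩
    exact ⟨u, lt_of_lt_of_le hu hmm, rfl⟩
  -- the dual of a simple basis element
  have hbs_inv : ∀ i : B, d (b (cs.simple i)) =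
      (T 2 : R) • b (cs.simple i) + ((T 2 - 1 : R)) • 1 := by
    intro i
    have h2 := (hd_basis (cs.simple i)).2
    rw [cs.inv_simple] at h2
    set s := b (cs.simple i) with hs
    set X : H := (T 2 : R) • s + ((T 2 - 1 : R)) • 1 with hX
    have e2 : (T 2 : R) * T (-2) = 1 := by rw [← T_add]; norm_num
    have hXs : X * s = 1 := by
      rw [hX, add_mul, smul_mul_assoc, smul_mul_assoc, one_mul, hquad i, ← hs]
      rw [smul_add, smul_smul, smul_smul, e2, one_smul, mul_sub, e2, mul_one]
      rw [add_assoc, ← add_smul]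
      ring_nf
      simp
    calc d s = 1 * d s := (one_mul _).symm
      _ = (X * s) * d s := by rw [hXs]
      _ = X * (s * d s) := mul_assoc _ _ _
      _ = X := by rw [h2, mul_one]
  -- multiplication by a simple basis element raises spans by at most one
  have mulS : ∀ (i : B) (m : ℕ) (h : H), h ∈ S m → b (cs.simple i) * h ∈ S (m + 1) := by
    intro i m h hh
    induction hh using Submodule.span_induction with
    | mem h hmem =>
      obtain ⟨u, hu, rfl⟩ := hmem
      rcases Nat.lt_or_gt_of_ne (cs.length_simple_mul_ne u i) with hlt | hgt
      · -- descent case : ℓ (s u) < ℓ u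
        have hdi : cs.length (cs.simple i * u) + 1 = cs.length u := by
          rcases cs.length_simple_mul u i with hcase | hcase
          · omega
          · exact hcase
        set u' := cs.simple i * u with hu'
        have huu : cs.simple i * u' = u := cs.simple_mul_simple_cancel_left i
        have hbu : b u = b (cs.simple i) * b u' := by
          rw [hmul _ _ (by rw [huu, cs.length_simple]; omega), huu]
        rw [hbu, ← mul_assoc, hquad i, add_mul, smul_mul_assoc, smul_mul_assoc, one_mul,
          ← hbu]
        refine Submodule.add_mem _ (Submodule.smul_mem _ _ ?_) (Submodule.smul_mem _ _ ?_)
        · exact Submodule.subset_span ⟨u', by omega, rfl⟩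
        · exact Submodule.subset_span ⟨u, by omega, rfl⟩
      · -- ascent case : ℓ (s u) > ℓ u
        have hlen : cs.length (cs.simple i * u) = cs.length (cs.simple i) + cs.length u := by
          rcases cs.length_simple_mul u i with hcase | hcase
          · rw [hcase, cs.length_simple]; omega
          · omega
        rw [hmul _ _ hlen]
        exact Submodule.subset_span ⟨cs.simple i * u, by rw [hlen, cs.length_simple]; omega, rfl⟩
    | zero => rw [mul_zero]; exact Submodule.zero_mem _
    | add p q hp hq hp' hq' => rw [mul_add]; exact Submodule.add_mem _ hp' hq'
    | smul r p hp hp' => rw [mul_smul_comm]; exact Submodule.smul_mem _ _ hp'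
  -- triangularity of d with respect to length
  have tri : ∀ (n : ℕ) (z : W), cs.length z = n →
      d (b z) - (T (2 * (n : ℤ)) : R) • b z ∈ S n := by
    intro n
    induction n using Nat.strong_induction_on with
    | _ n ih =>
      intro z hz
      match n, hz with
      | 0, hz =>
        have hz1 : z = 1 := cs.length_eq_zero_iff.mp hz
        subst hz1
        rw [hone, map_one]
        norm_num
      | (m + 1), hz =>
        have hz1 : z ≠ 1 := by
          intro h; rw [h, cs.length_one] at hz; omega
        obtain ⟨i, hi⟩ := cs.exists_leftDescent_of_ne_one hz1
        set z' := cs.simple i * z with hz'def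
        have hz' : cs.length z' = m := by
          have h1 := cs.length_simple_mul z i
          have h2 : cs.length (cs.simple i * z) < cs.length z := hi
          rw [← hz'def] at h1 h2
          omega
        have hzz : cs.simple i * z' = z := cs.simple_mul_simple_cancel_left i
        have hb : b z = b (cs.simple i) * b z' := by
          rw [hmul _ _ (by rw [hzz, cs.length_simple]; omega), hzz]
        have hE := ih m (by omega) z' hz'
        set E := d (b z') - (T (2 * (m : ℤ)) : R) • b z' with hEdef
        have hD : d (b z') = (T (2 * (m : ℤ)) : R) • b z' + E := by
          rw [hEdef, add_sub_cancel]
        have hT : (T (2 * ((m + 1 : ℕ) : ℤ)) : R) = T 2 * T (2 * (m : ℤ)) := by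
          rw [← T_add]; congr 1; push_cast; ring
        have key : d (b z) - (T (2 * ((m + 1 : ℕ) : ℤ)) : R) • b z
            = (T 2 : R) • (b (cs.simple i) * E)
              + ((T 2 - 1) * T (2 * (m : ℤ)) : R) • b z'
              + ((T 2 - 1 : R)) • E := by
          rw [hb, map_mul, hbs_inv i, hD, hT]
          rw [add_mul, smul_mul_assoc, smul_mul_assoc, one_mul, mul_add, mul_smul_comm]
          module
        rw [key]
        refine Submodule.add_mem _ (Submodule.add_mem _ ?_ ?_) ?_
        · exact Submodule.smul_mem _ _ (mulS i m E hE)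
        · exact Submodule.smul_mem _ _ (Submodule.subset_span ⟨z', by omega, rfl⟩)
        · exact Submodule.smul_mem _ _ (Smono (by omega) hE)
  -- coefficients of elements of S m vanish at long elements
  have coeffS : ∀ (m : ℕ) (h : H), h ∈ S m → ∀ y : W, m ≤ cs.length y → b.repr h y = 0 := by
    intro m h hh
    induction hh using Submodule.span_induction with
    | mem h hmem =>
      obtain ⟨u, hu, rfl⟩ := hmem
      intro y hy
      have huy : u ≠ y := by intro h; subst h; omega
      rw [b.repr_self, Finsupp.single_apply, if_neg huy]
    | zero => intro y _; simp
    | add p q hp hq hp' hq' => intro y hy; rw [map_add, Finsupp.add_apply, hp' y hy, hq' y hy, add_zero]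
    | smul r p hp hp' => intro y hy; rw [map_smul, Finsupp.smul_apply, hp' y hy, smul_zero]
  -- triangularity in coefficient form
  have tri' : ∀ z y : W, cs.length z ≤ cs.length y →
      b.repr (d (b z)) y = if z = y then (T (2 * (cs.length z : ℤ)) : R) else 0 := by
    intro z y hzy
    have h1 := coeffS _ _ (tri (cs.length z) z rfl) y hzy
    rw [map_sub, map_smul, Finsupp.sub_apply, Finsupp.smul_apply, b.repr_self,
      Finsupp.single_apply, sub_eq_zero] at h1
    rw [h1]
    by_cases hcase : z = y
    · rw [if_pos hcase, if_pos hcase, smul_eq_mul, mul_one]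
    · rw [if_neg hcase, if_neg hcase, smul_eq_mul, mul_zero]
  -- the main argument
  by_contra hne
  set C := A - A' with hCdef
  have hC0 : C ≠ 0 := sub_ne_zero_of_ne hne
  have hdC : d C = C := by rw [hCdef, map_sub, hA, hA']
  set c := b.repr C with hcdef
  have hc0 : c ≠ 0 := by
    intro h
    exact hC0 (by simpa [hcdef] using congrArg b.repr.symm h)
  obtain ⟨y, hy, hymax⟩ := Finset.exists_max_image c.support (fun w => cs.length w)
    (Finsupp.support_nonempty_iff.mpr hc0)
  have hcy : c y ≠ 0 := Finsupp.mem_support_iff.mp hy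
  -- decompose C as a sum over the support
  have hsum : C = ∑ z ∈ c.support, c z • b z := by
    calc C = b.repr.symm c := (b.repr.symm_apply_apply C).symm
      _ = ∑ z ∈ c.support, c z • b z := by
          rw [b.repr_symm_apply, Finsupp.linearCombination_apply, Finsupp.sum]
  have hdsum : d C = ∑ z ∈ c.support, (invert (c z) : R) • d (b z) := by
    rw [hsum, map_sum]
    exact Finset.sum_congr rfl fun z _ => hd_smul _ _
  -- the coefficient identity at the maximal element y
  have hcoeff : c y = (invert (c y) : R) * T (2 * (cs.length y : ℤ)) := by
    have step : ∀ z ∈ c.support, (b.repr ((invert (c z) : R) • d (b z))) y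
        = if z = y then (invert (c y) : R) * T (2 * (cs.length y : ℤ)) else 0 := by
      intro z hz
      rw [map_smul, Finsupp.smul_apply, smul_eq_mul, tri' z y (hymax z hz)]
      by_cases hcase : z = y
      · subst hcase; rw [if_pos rfl, if_pos rfl]
      · rw [if_neg hcase, if_neg hcase, mul_zero]
    conv_lhs => rw [hcdef, ← hdC, hdsum]
    rw [map_sum, Finset.sum_apply', Finset.sum_congr rfl step,
      Finset.sum_ite_eq' c.support y
        (fun _ => (invert (c y) : R) * T (2 * (cs.length y : ℤ))), if_pos hy]
  -- the Laurent polynomial argument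
  set n : ℤ := (cs.length y : ℤ) with hn
  set h : R := T (-n) * c y with hhdef
  have hvzv : h ∈ vZv := by
    by_cases h1 : bruhatLE cs y x
    · by_cases h2 : y = x
      · exfalso
        apply hcy
        rw [hcdef, hCdef, map_sub, Finsupp.sub_apply, h2, htopA, htopA', sub_self]
      · have hvA := hlowA y h1 h2
        have hvA' := hlowA' y h1 h2
        have : h = T (-n) * b.repr A y - T (-n) * b.repr A' y := by
          rw [hhdef, hcdef, hCdef, map_sub, Finsupp.sub_apply, mul_sub]
        rw [this]
        exact Submodule.sub_mem _ hvA hvA'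
    · exfalso
      apply hcy
      rw [hcdef, hCdef, map_sub, Finsupp.sub_apply, hsuppA y h1, hsuppA' y h1, sub_self]
  -- h is invert-invariant
  have hinv : (invert h : R) = h := by
    have hicy : (invert (c y) : R) = c y * T (-(2 * n)) := by
      conv_rhs => rw [hcoeff]
      rw [mul_assoc, ← T_add, add_neg_cancel, T_zero, mul_one]
    rw [hhdef, map_mul, invert_T, neg_neg, hicy]
    rw [mul_comm (c y) ((T (-(2*n)) : R)), ← mul_assoc, ← T_add]
    rw [show n + -(2 * n) = -n by ring]
  -- coefficients of elements of vZv vanish in nonpositive degrees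
  have hpos : ∀ k : ℤ, k ≤ 0 → h.coeff k = 0 := by
    have : ∀ q : R, q ∈ vZv → ∀ k : ℤ, k ≤ 0 → q.coeff k = 0 := by
      intro q hq
      induction hq using Submodule.span_induction with
      | mem q hqmem =>
        obtain ⟨m, rfl⟩ := hqmem
        intro k hk
        show (Finsupp.single ((m : ℤ) + 1) (1 : ℤ)) k = 0
        rw [Finsupp.single_apply, if_neg (by omega)]
      | zero => intro k _; rfl
      | add p q hp hq hp' hq' =>
        intro k hk
        show (p.coeff + q.coeff) k = 0
        rw [Finsupp.add_apply, hp' k hk, hq' k hk, add_zero]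
      | smul r p hp hp' =>
        intro k hk
        show (r • p.coeff) k = 0
        rw [Finsupp.smul_apply, hp' k hk, smul_zero]
    exact this h hvzv
  have hall : h = 0 := by
    ext k
    rcases le_or_gt k 0 with hk | hk
    · exact hpos k hk
    · calc h.coeff k = (invert h : R).coeff k := by rw [hinv]
        _ = h.coeff (-k) := invert_apply h k
        _ = 0 := hpos (-k) (by omega)
  apply hcy
  have : c y = T n * h := by
    rw [hhdef, ← mul_assoc, ← T_add, add_neg_cancel, T_zero, one_mul]
  rw [this, hall, mul_zero]
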